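/- arXiv:2001.09343 — 5 statements merged into one kernel-verified Lean document; each statement's English description precedes it below -/
import Mathlib

section
/- Let H be a finite-dimensional real inner product space, let r > 0, and let μ, v ∈ H. Define f : H → ℝ by f(q) = ‖q‖ + ⟪μ, q⟫ + (r/2)‖q − v‖², and set w = r•v − μ. If ‖w‖ > 1, then the point q* = (1/r)·(1 − 1/‖w‖)•w is a global minimizer of f, i.e., f(q) ≥ f(q*) for all q ∈ H. -/
/-- Soft-thresholding solution of the q-subproblem (case ‖w‖ > 1):
the point q* = (1/r)·(1 − 1/‖w‖)•w is a global minimizer of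
f(q) = ‖q‖ + ⟪μ, q⟫ + (r/2)‖q − v‖², where w = r•v − μ. -/
theorem soft_thresholding_minimizer
    {H : Type*} [NormedAddCommGroup H] [InnerProductSpace ℝ H] [FiniteDimensional ℝ H]
    (r : ℝ) (hr : 0 < r) (μ v : H)
    (f : H → ℝ) (hf : ∀ q : H, f q = ‖q‖ + (inner ℝ μ q : ℝ) + (r / 2) * ‖q - v‖ ^ 2)
    (w : H) (hw : w = r • v - μ) (hnorm : 1 < ‖w‖) :
    ∀ q : H, f q ≥ f (((1 / r) * (1 - 1 / ‖w‖)) • w) := by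
  have hμ : μ = r • v - w := by rw [hw]; abel
  have key : ∀ p : H, f p = ‖p‖ - (inner ℝ w p : ℝ) + (r/2) * ‖p‖^2 + (r/2) * ‖v‖^2 := by
    intro p
    rw [hf p, hμ]
    have h1 : ‖p - v‖^2 = ‖p‖^2 - 2 * (inner ℝ p v : ℝ) + ‖v‖^2 := norm_sub_sq_real p v
    have h2 : (inner ℝ (r • v - w) p : ℝ) = r * (inner ℝ v p : ℝ) - (inner ℝ w p : ℝ) := by
      rw [inner_sub_left, real_inner_smul_left]
    have h3 : (inner ℝ p v : ℝ) = (inner ℝ v p : ℝ) := real_inner_comm v p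
    rw [h1, h2, h3]; ring
  intro q
  set c : ℝ := (1 / r) * (1 - 1 / ‖w‖) with hc
  have hwpos : (0:ℝ) < ‖w‖ := lt_trans one_pos hnorm
  have hcpos : 0 ≤ c := by
    apply mul_nonneg (le_of_lt (by positivity))
    have : 1 / ‖w‖ < 1 := by rw [div_lt_one hwpos]; exact hnorm
    linarith
  have hnq : ‖c • w‖ = c * ‖w‖ := by
    rw [norm_smul, Real.norm_eq_abs, abs_of_nonneg hcpos]
  have hiq : (inner ℝ w (c • w) : ℝ) = c * ‖w‖^2 := by
    rw [real_inner_smul_right, real_inner_self_eq_norm_sq]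
  rw [key q, key (c • w), hnq, hiq]
  have hbound : (inner ℝ w q : ℝ) ≤ ‖w‖ * ‖q‖ := real_inner_le_norm w q
  have hq0 : 0 ≤ ‖q‖ := norm_nonneg q
  have ht : r * (c * ‖w‖) = ‖w‖ - 1 := by
    rw [hc]; field_simp
  nlinarith [sq_nonneg (‖q‖ - c * ‖w‖), mul_nonneg hcpos (le_of_lt hwpos)]
end

section
/- Let H be a finite-dimensional real inner product space, let r > 0, and let μ, v ∈ H. Define f : H → ℝ by f(q) = ‖q‖ + ⟪μ, q⟫ + (r/2)‖q − v‖², and set w = r•v − μ. If ‖w‖ > 1, then the minimizer of f is unique: any q ∈ H with f(q) ≤ f(q') for all q' ∈ H must equal (1/r)·(1 − 1/‖w‖)•w. -/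
/-- Uniqueness of the soft-thresholding minimizer (case ‖w‖ > 1): any global
minimizer of f(q) = ‖q‖ + ⟪μ, q⟫ + (r/2)‖q − v‖² equals (1/r)·(1 − 1/‖w‖)•w,
where w = r•v − μ. -/
theorem soft_thresholding_minimizer_unique
    {H : Type*} [NormedAddCommGroup H] [InnerProductSpace ℝ H] [FiniteDimensional ℝ H]
    (r : ℝ) (hr : 0 < r) (μ v : H)
    (f : H → ℝ) (hf : ∀ q : H, f q = ‖q‖ + (inner ℝ μ q : ℝ) + (r / 2) * ‖q - v‖ ^ 2)
    (w : H) (hw : w = r • v - μ) (hnorm : 1 < ‖w‖) :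
    ∀ q : H, (∀ q' : H, f q ≤ f q') → q = ((1 / r) * (1 - 1 / ‖w‖)) • w := by
  intro q hq
  set nw := ‖w‖ with hnwdef
  have hnw0 : (0:ℝ) < nw := lt_trans one_pos hnorm
  have hμ : μ = r • v - w := by rw [hw]; abel
  set t : ℝ := (1/r) * (1 - 1/nw) with ht
  have ht0 : 0 ≤ t := by
    apply mul_nonneg (by positivity)
    have : 1/nw < 1 := by
      rw [div_lt_one hnw0]; exact hnorm
    linarith
  have hrt : r * (t * nw) = nw - 1 := by
    rw [ht]; field_simp
  have hq' := hq (t • w)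
  rw [hf q, hf (t • w)] at hq'
  set a := ‖q‖ with ha'
  set ip := (inner ℝ w q : ℝ) with hip'
  have e1 : (inner ℝ μ q : ℝ) = r * (inner ℝ v q : ℝ) - ip := by
    rw [hμ, inner_sub_left, real_inner_smul_left]
  have e2 : (inner ℝ μ (t • w) : ℝ) = r * (inner ℝ v (t • w) : ℝ) - t * nw^2 := by
    simp only [hμ, inner_sub_left, real_inner_smul_left, real_inner_smul_right,
      real_inner_self_eq_norm_sq]
    rw [← hnwdef]; ring
  have e3 : ‖q - v‖^2 = a^2 - 2 * (inner ℝ v q : ℝ) + ‖v‖^2 := by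
    rw [@norm_sub_sq_real, real_inner_comm]
  have e4 : ‖t • w - v‖^2 = ‖t • w‖^2 - 2 * (inner ℝ v (t • w) : ℝ) + ‖v‖^2 := by
    rw [@norm_sub_sq_real, real_inner_comm]
  have e5 : ‖t • w‖ = t * nw := by
    rw [norm_smul, Real.norm_eq_abs, abs_of_nonneg ht0]
  rw [e1, e2, e3, e4, e5] at hq'
  -- key reduced inequality
  have key : a - ip + (r/2) * a^2 ≤
      t * nw - (t * nw) * nw + (r/2) * (t * nw)^2 := by linarith [hq']
  have cs : ip ≤ nw * a := real_inner_le_norm w q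
  have hrtA : (r * (t * nw)) * a = (nw - 1) * a := by rw [hrt]
  have hrtS : (r * (t * nw)) * (t * nw) = (nw - 1) * (t * nw) := by rw [hrt]
  obtain ⟨ha, hip⟩ : a = t * nw ∧ ip = nw * a := by
    clear hq' e1 e2 e3 e4 e5 hq hf hrt ht0 hμ hw
    have hst : ∃ s : ℝ, s = t * nw := ⟨_, rfl⟩
    obtain ⟨s, hs⟩ := hst
    rw [← hs] at key hrtA hrtS ⊢
    have hsqr : r * (a - s)^2 ≤ 0 := by nlinarith [key, cs, hrtA, hrtS]
    have hsq0 : (a - s)^2 = 0 := by nlinarith [hsqr, sq_nonneg (a - s), hr]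
    have has : a = s := by
      have := pow_eq_zero_iff (n := 2) (by norm_num) |>.mp hsq0
      linarith [this]
    refine ⟨has, ?_⟩
    rw [has] at key ⊢
    nlinarith [key, cs, has, hrtS]
  -- equality in Cauchy–Schwarz
  have heq : ‖q‖ • w = ‖w‖ • q := (inner_eq_norm_mul_iff_real).mp hip
  have hq_eq : q = (nw⁻¹ * a) • w := by
    have h1 : nw • q = a • w := heq.symm
    have h2 : nw⁻¹ • (nw • q) = nw⁻¹ • (a • w) := by rw [h1]
    rwa [smul_smul, inv_mul_cancel₀ hnw0.ne', one_smul, smul_smul] at h2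
  rw [hq_eq, ha]
  congr 1
  field_simp
end

section
/- Let H be a finite-dimensional real inner product space, let r > 0, and let μ, v ∈ H. Define f : H → ℝ by f(q) = ‖q‖ + ⟪μ, q⟫ + (r/2)‖q − v‖². A nonzero point q ∈ H is a global minimizer of f if and only if (1/‖q‖)•q + μ + r•(q − v) = 0. -/
private lemma expand_sq {H : Type*} [NormedAddCommGroup H] [InnerProductSpace ℝ H]
    (x y : H) (s : ℝ) :
    ‖x + s • y‖^2 = ‖x‖^2 + 2*s*(inner ℝ x y : ℝ) + s^2*‖y‖^2 := by
  rw [norm_add_sq_real, real_inner_smul_right, norm_smul, Real.norm_eq_abs, mul_pow, sq_abs]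
  ring

/-- First-order optimality condition at a nonzero point for the q-subproblem:
a nonzero q is a global minimizer of f(q) = ‖q‖ + ⟪μ, q⟫ + (r/2)‖q − v‖²
iff (1/‖q‖)•q + μ + r•(q − v) = 0. -/
theorem q_subproblem_optimality_nonzero
    {H : Type*} [NormedAddCommGroup H] [InnerProductSpace ℝ H] [FiniteDimensional ℝ H]
    (r : ℝ) (hr : 0 < r) (μ v : H)
    (f : H → ℝ) (hf : ∀ q : H, f q = ‖q‖ + (inner ℝ μ q : ℝ) + (r / 2) * ‖q - v‖ ^ 2)
    (q : H) (hq : q ≠ 0) :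
    (∀ q' : H, f q' ≥ f q) ↔ (1 / ‖q‖) • q + μ + r • (q - v) = 0 := by
  have hn : (0:ℝ) < ‖q‖ := norm_pos_iff.mpr hq
  constructor
  · -- forward: minimality ⇒ gradient zero
    intro hmin
    by_contra hg0
    set g : H := (1 / ‖q‖) • q + μ + r • (q - v) with hgdef
    have hG : (0:ℝ) < ‖g‖ := norm_pos_iff.mpr hg0
    obtain ⟨n, hndef, hn'⟩ : ∃ n : ℝ, n = ‖q‖ ∧ 0 < n := ⟨‖q‖, rfl, hn⟩
    obtain ⟨G, hGdef, hG'⟩ : ∃ G : ℝ, G = ‖g‖ ∧ 0 < G := ⟨‖g‖, rfl, hG⟩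
    obtain ⟨a, hadef⟩ : ∃ a : ℝ, a = (inner ℝ q g : ℝ) := ⟨_, rfl⟩
    obtain ⟨m, hmdef⟩ : ∃ m : ℝ, m = (inner ℝ μ g : ℝ) := ⟨_, rfl⟩
    obtain ⟨w, hwdef⟩ : ∃ w : ℝ, w = (inner ℝ (q - v) g : ℝ) := ⟨_, rfl⟩
    have hgg : a/n + m + r*w = G^2 := by
      have h1 : (inner ℝ g g : ℝ) = (1/‖q‖) * (inner ℝ q g : ℝ) + (inner ℝ μ g : ℝ)
          + r * (inner ℝ (q - v) g : ℝ) := by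
        nth_rewrite 1 [hgdef]
        rw [inner_add_left, inner_add_left, real_inner_smul_left, real_inner_smul_left]
      rw [hGdef, ← real_inner_self_eq_norm_sq, h1, ← hndef, ← hadef, ← hmdef, ← hwdef]
      ring
    obtain ⟨P, hPdef⟩ : ∃ P : ℝ, P = a / n := ⟨_, rfl⟩
    obtain ⟨S, hSdef⟩ : ∃ S : ℝ, S = G^2 / (2*n) := ⟨_, rfl⟩
    have hS0 : 0 ≤ S := by rw [hSdef]; positivity
    obtain ⟨C, hCdef⟩ : ∃ C : ℝ, C = S + (r/2) * G^2 := ⟨_, rfl⟩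
    have hC : (0:ℝ) < C := by rw [hCdef]; positivity
    obtain ⟨t, htdef⟩ : ∃ t : ℝ, t = min (n / (|P| + 1)) (G^2 / (2*C)) := ⟨_, rfl⟩
    have ht : 0 < t := by
      rw [htdef]; apply lt_min <;> positivity
    have ht1 : t * (|P| + 1) ≤ n := by
      have h2 : t ≤ n / (|P| + 1) := htdef ▸ min_le_left _ _
      calc t * (|P| + 1) ≤ (n / (|P| + 1)) * (|P| + 1) := by
            apply mul_le_mul_of_nonneg_right h2; positivity
        _ = n := by field_simp
    have ht2 : t * C ≤ G^2 / 2 := by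
      have h2 : t ≤ G^2 / (2*C) := htdef ▸ min_le_right _ _
      calc t * C ≤ (G^2 / (2*C)) * C := mul_le_mul_of_nonneg_right h2 hC.le
        _ = G^2 / 2 := by field_simp
    obtain ⟨A, hAdef⟩ : ∃ A : ℝ, A = n - t * P + t^2 * S := ⟨_, rfl⟩
    have hA0 : 0 ≤ A := by
      have h1 : t * P ≤ t * |P| := mul_le_mul_of_nonneg_left (le_abs_self P) ht.le
      rw [hAdef]
      nlinarith [mul_nonneg (sq_nonneg t) hS0]
    have hnormsq : ‖q - t • g‖^2 = n^2 - 2*t*a + t^2 * G^2 := by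
      have h1 : q - t • g = q + (-t) • g := by rw [neg_smul]; abel
      rw [h1, expand_sq, ← hadef, ← hndef, ← hGdef]; ring
    have hA2 : A^2 = n^2 - 2*t*a + t^2 * G^2 + (t*P - t^2*S)^2 := by
      rw [hAdef, hPdef, hSdef]
      field_simp
      ring
    have hnorm : ‖q - t • g‖ ≤ A := by
      have h1 : ‖q - t • g‖ = Real.sqrt (‖q - t • g‖^2) := (Real.sqrt_sq (norm_nonneg _)).symm
      rw [h1]
      calc Real.sqrt (‖q - t • g‖^2) ≤ Real.sqrt (A^2) := by
            apply Real.sqrt_le_sqrt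
            rw [hnormsq, hA2]; nlinarith [sq_nonneg (t*P - t^2*S)]
        _ = A := Real.sqrt_sq hA0
    have hinner : (inner ℝ μ (q - t • g) : ℝ) = (inner ℝ μ q : ℝ) - t * m := by
      rw [inner_sub_right, real_inner_smul_right, hmdef]
    have hquad : ‖(q - t • g) - v‖^2 = ‖q - v‖^2 - 2*t*w + t^2 * G^2 := by
      have h1 : (q - t • g) - v = (q - v) + (-t) • g := by rw [neg_smul]; abel
      rw [h1, expand_sq, ← hwdef, ← hGdef]; ring
    have key : f (q - t • g) ≤ f q - t * G^2 + t^2 * C := by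
      rw [hf (q - t • g), hf q, hinner, hquad]
      have h2 : A + ((inner ℝ μ q : ℝ) - t * m)
          + (r/2) * (‖q - v‖^2 - 2*t*w + t^2 * G^2)
          = (‖q‖ + (inner ℝ μ q : ℝ) + (r/2) * ‖q - v‖^2) - t * (a/n + m + r*w)
            + t^2 * C := by
        rw [hAdef, hCdef, hPdef, ← hndef]; ring
      rw [hgg] at h2
      linarith [hnorm]
    have hlt : f (q - t • g) < f q := by
      have h4 : t * (t * C) ≤ t * (G^2 / 2) := mul_le_mul_of_nonneg_left ht2 ht.le
      have e5 : t^2 * C = t * (t * C) := by ring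
      have e6 : t * (G^2/2) = t * G^2 / 2 := by ring
      have pos : 0 < t * G^2 := by positivity
      linarith [key]
    linarith [hmin (q - t • g)]
  · -- backward: gradient zero ⇒ global minimum (convexity)
    intro h q'
    have hμ : μ = -((1 / ‖q‖) • q + r • (q - v)) := by
      have h2 : ((1 / ‖q‖) • q + r • (q - v)) + μ = 0 := by rw [← h]; abel
      exact (neg_eq_of_add_eq_zero_right h2).symm
    have hcs : (inner ℝ q q' : ℝ) ≤ ‖q‖ * ‖q'‖ := real_inner_le_norm q q'
    have e1 : ‖q' - v‖^2 = ‖q - v‖^2 + 2*((inner ℝ (q-v) q' : ℝ) - (inner ℝ (q-v) q : ℝ))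
        + ‖q' - q‖^2 := by
      have h3 : q' - v = (q - v) + (q' - q) := by abel
      rw [h3, norm_add_sq_real, inner_sub_right]
    have e2 : (inner ℝ μ q' : ℝ) = -((1/‖q‖) * (inner ℝ q q' : ℝ)) - r * (inner ℝ (q-v) q' : ℝ) := by
      rw [hμ, inner_neg_left, inner_add_left, real_inner_smul_left, real_inner_smul_left]
      ring
    have e3 : (inner ℝ μ q : ℝ) = -((1/‖q‖) * (inner ℝ q q : ℝ)) - r * (inner ℝ (q-v) q : ℝ) := by
      rw [hμ, inner_neg_left, inner_add_left, real_inner_smul_left, real_inner_smul_left]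
      ring
    have e4 : (inner ℝ q q : ℝ) = ‖q‖^2 := real_inner_self_eq_norm_sq q
    have h5 : (1/‖q‖) * (inner ℝ q q' : ℝ) ≤ ‖q'‖ := by
      rw [div_mul_eq_mul_div, one_mul, div_le_iff₀ hn]
      linarith [hcs]
    have h6 : (1/‖q‖) * (inner ℝ q q : ℝ) = ‖q‖ := by
      rw [e4]; field_simp
    rw [hf q', hf q, e2, e3]
    nlinarith [sq_nonneg ‖q' - q‖, mul_nonneg hr.le (sq_nonneg ‖q' - q‖)]
end

section
/- Let H be a finite-dimensional real inner product space, let r > 0, and let μ, v ∈ H with w = r•v − μ ≠ 0. Then every global minimizer q of f(q) = ‖q‖ + ⟪μ, q⟫ + (r/2)‖q − v‖² lies on the nonnegative ray spanned by w: there exists t ≥ 0 such that q = t•w. -/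
/-- Alignment lemma: if w = r•v − μ ≠ 0, then every global minimizer of
f(q) = ‖q‖ + ⟪μ, q⟫ + (r/2)‖q − v‖² lies on the nonnegative ray spanned by w. -/
theorem q_subproblem_minimizer_aligned
    {H : Type*} [NormedAddCommGroup H] [InnerProductSpace ℝ H] [FiniteDimensional ℝ H]
    (r : ℝ) (hr : 0 < r) (μ v : H)
    (f : H → ℝ) (hf : ∀ q : H, f q = ‖q‖ + (inner ℝ μ q : ℝ) + (r / 2) * ‖q - v‖ ^ 2)
    (w : H) (hw : w = r • v - μ) (hw0 : w ≠ 0) :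
    ∀ q : H, (∀ q' : H, f q ≤ f q') → ∃ t : ℝ, 0 ≤ t ∧ q = t • w := by
  intro q hmin
  rcases eq_or_ne q 0 with hq0 | hq0
  · exact ⟨0, le_refl 0, by simp [hq0]⟩
  -- key identity: f x = ‖x‖ + (r/2)‖x‖² - ⟪w,x⟫ + (r/2)‖v‖²
  have key : ∀ x : H, f x = ‖x‖ + (r / 2) * ‖x‖ ^ 2 - (inner ℝ w x : ℝ)
      + (r / 2) * ‖v‖ ^ 2 := by
    intro x
    rw [hf x, hw]
    have h1 : ‖x - v‖ ^ 2 = ‖x‖ ^ 2 - 2 * (inner ℝ x v : ℝ) + ‖v‖ ^ 2 := by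
      rw [@norm_sub_sq_real]
    have h2 : (inner ℝ (r • v - μ) x : ℝ) = r * (inner ℝ v x : ℝ) - (inner ℝ μ x : ℝ) := by
      rw [inner_sub_left, real_inner_smul_left]
    rw [h1, h2, real_inner_comm v x]
    ring
  set c : ℝ := ‖q‖ / ‖w‖ with hc
  have hwpos : (0:ℝ) < ‖w‖ := norm_pos_iff.mpr hw0
  have hc0 : 0 ≤ c := div_nonneg (norm_nonneg q) (norm_nonneg w)
  have hnormcw : ‖c • w‖ = ‖q‖ := by
    rw [norm_smul, Real.norm_of_nonneg hc0, hc, div_mul_cancel₀]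
    exact hwpos.ne'
  have hinner : (inner ℝ w (c • w) : ℝ) = ‖q‖ * ‖w‖ := by
    rw [real_inner_smul_right, real_inner_self_eq_norm_sq, hc]
    field_simp
  have hle := hmin (c • w)
  rw [key q, key (c • w), hnormcw, hinner] at hle
  have hge : ‖q‖ * ‖w‖ ≤ (inner ℝ w q : ℝ) := by linarith
  have heq : (inner ℝ w q : ℝ) = ‖w‖ * ‖q‖ := by
    have := real_inner_le_norm w q
    linarith [mul_comm ‖q‖ ‖w‖]
  have halign : ‖q‖ • w = ‖w‖ • q := (inner_eq_norm_mul_iff_real).mp heq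
  refine ⟨c, hc0, ?_⟩
  have : (‖w‖)⁻¹ • (‖q‖ • w) = (‖w‖)⁻¹ • (‖w‖ • q) := by rw [halign]
  rw [smul_smul, smul_smul, inv_mul_cancel₀ hwpos.ne', one_smul] at this
  rw [← this, hc, div_eq_inv_mul, mul_comm, ← smul_smul]
end

section
/- Let H be a finite-dimensional real inner product space, let r > 0, and let μ, v ∈ H with w = r•v − μ satisfying ‖w‖ > 1. Then the point q* = (1/r)·(1 − 1/‖w‖)•w is nonzero and satisfies the stationarity equation (1/‖q*‖)•q* + μ + r•(q* − v) = 0. -/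
/-- The soft-thresholding point q* = (1/r)·(1 − 1/‖w‖)•w, for w = r•v − μ with
‖w‖ > 1, is nonzero and satisfies the stationarity equation
(1/‖q*‖)•q* + μ + r•(q* − v) = 0 of the q-subproblem. -/
theorem soft_thresholding_stationarity
    {H : Type*} [NormedAddCommGroup H] [InnerProductSpace ℝ H] [FiniteDimensional ℝ H]
    (r : ℝ) (hr : 0 < r) (μ v : H)
    (w : H) (hw : w = r • v - μ) (hnorm : 1 < ‖w‖)
    (qstar : H) (hqstar : qstar = ((1 / r) * (1 - 1 / ‖w‖)) • w) :
    qstar ≠ 0 ∧ (1 / ‖qstar‖) • qstar + μ + r • (qstar - v) = 0 := by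
  have hwpos : (0:ℝ) < ‖w‖ := lt_trans one_pos hnorm
  have hwne : w ≠ 0 := by simpa using hwpos.ne'
  have hc : (0:ℝ) < (1 / r) * (1 - 1 / ‖w‖) := by
    apply mul_pos (by positivity)
    have : 1 / ‖w‖ < 1 := by
      rw [div_lt_one hwpos]; exact hnorm
    linarith
  have hq0 : qstar ≠ 0 := by
    rw [hqstar]
    exact smul_ne_zero hc.ne' hwne
  refine ⟨hq0, ?_⟩
  have hnq : ‖qstar‖ = ((1 / r) * (1 - 1 / ‖w‖)) * ‖w‖ := by
    rw [hqstar, norm_smul, Real.norm_of_nonneg hc.le]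
  rw [hnq, hqstar, smul_smul]
  have hμ : μ = r • v - w := by rw [hw]; abel
  rw [hμ]
  have h1 : 1 / ((1 / r * (1 - 1 / ‖w‖)) * ‖w‖) * (1 / r * (1 - 1 / ‖w‖)) = 1 / ‖w‖ := by
    have h3 : ‖w‖ - 1 ≠ 0 := by linarith
    field_simp
  rw [h1, smul_sub, smul_smul]
  have h2 : r * (1 / r * (1 - 1 / ‖w‖)) = 1 - 1 / ‖w‖ := by field_simp
  rw [h2]
  module
end
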